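/- Consider the constrained optimization: minimize f(a) = (I a | a)/2 over a ∈ ℝ³ subject to |I a| = m₀ for a fixed m₀ > 0, where I = diag(λ₁, λ₂, λ₃) with 0 < λ₁ ≤ λ₂ ≤ λ₃. Then the critical points of f on the constraint set are exactly the eigenvectors of I with |I a| = m₀, and local minima occur only at eigenvectors associated with λ* = λ₃ = max{λ₁, λ₂, λ₃} (when λ₃ is a strict maximum, only at a ∈ span(e₃)). -/

import Mathlib

open Matrix

/-- Splitting a sum over `Fin 3` that differs only at two indices. -/
private lemma sum3_eq' (F G : Fin 3 → ℝ) (j k : Fin 3) (hjk : j ≠ k) (Δ : ℝ)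
    (hother : ∀ i, i ≠ j → i ≠ k → F i = G i) (hsum : F j + F k = G j + G k + Δ) :
    ∑ i, F i = (∑ i, G i) + Δ := by
  have h1 : ∑ i ∈ ({j, k} : Finset (Fin 3)), (F i - G i) = ∑ i, (F i - G i) := by
    apply Finset.sum_subset (Finset.subset_univ _)
    intro x _ hx
    simp only [Finset.mem_insert, Finset.mem_singleton] at hx
    push_neg at hx
    rw [hother x hx.1 hx.2]; ring
  rw [Finset.sum_pair hjk] at h1
  have h2 : ∑ i, (F i - G i) = (∑ i, F i) - ∑ i, G i := Finset.sum_sub_distrib _ _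
  linarith

private lemma aux_sq (L σ t : ℝ) (hL : L ≠ 0) (hσ : σ ^ 2 = 1) (ht : 0 ≤ t) :
    (L * (σ * Real.sqrt t / L)) ^ 2 = t := by
  have h1 : Real.sqrt t ^ 2 = t := Real.sq_sqrt ht
  field_simp
  linear_combination t * hσ + σ ^ 2 * h1

private lemma aux_val (L σ t : ℝ) (hL : L ≠ 0) (hσ : σ ^ 2 = 1) (ht : 0 ≤ t) :
    L * (σ * Real.sqrt t / L) * (σ * Real.sqrt t / L) = t / L := by
  have h1 : Real.sqrt t ^ 2 = t := Real.sq_sqrt ht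
  field_simp
  linear_combination t * hσ + σ ^ 2 * h1

private lemma pair_eq {lx ly ax ay : ℝ} (p : (lx - ly) * (ax * ay) = 0)
    (hx : ax ≠ 0) (hy : ay ≠ 0) : lx = ly := by
  rcases mul_eq_zero.1 p with h | h
  · linarith
  · exact absurd h (mul_ne_zero hx hy)

private lemma key_lemma (l : Fin 3 → ℝ) (hl : ∀ i, 0 < l i) (m₀ : ℝ)
    (f : (Fin 3 → ℝ) → ℝ) (hf : f = fun a => (∑ i, l i * a i * a i) / 2)
    (S : Set (Fin 3 → ℝ))
    (hS : S = {a : Fin 3 → ℝ | Real.sqrt (∑ i, (l i * a i) ^ 2) = m₀})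
    (a : Fin 3 → ℝ) (ha : a ∈ S) (j k : Fin 3) (hjk : l j < l k)
    (hmin : IsLocalMinOn f S a) : a j = 0 := by
  by_contra haj
  have hjk' : j ≠ k := by rintro rfl; exact lt_irrefl _ hjk
  have hj0 : (0:ℝ) < l j := hl j
  have hk0 : (0:ℝ) < l k := hl k
  set bj : ℝ := l j * a j with hbj_def
  set bk : ℝ := l k * a k with hbk_def
  have hbj : bj ≠ 0 := mul_ne_zero hj0.ne' haj
  set r2 : ℝ := bj ^ 2 + bk ^ 2 with hr2_def
  have hbj2r2 : bj ^ 2 ≤ r2 := le_add_of_nonneg_right (sq_nonneg _)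
  set σj : ℝ := if bj < 0 then -1 else 1 with hσj_def
  set σk : ℝ := if bk < 0 then -1 else 1 with hσk_def
  have hσj_abs : σj * |bj| = bj := by
    rw [hσj_def]; rcases lt_or_ge bj 0 with h | h
    · simp [h, abs_of_neg h]
    · simp [not_lt.2 h, abs_of_nonneg h]
  have hσk_abs : σk * |bk| = bk := by
    rw [hσk_def]; rcases lt_or_ge bk 0 with h | h
    · simp [h, abs_of_neg h]
    · simp [not_lt.2 h, abs_of_nonneg h]
  have hσj_sq : σj ^ 2 = 1 := by rw [hσj_def]; split <;> norm_num
  have hσk_sq : σk ^ 2 = 1 := by rw [hσk_def]; split <;> norm_num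
  set c : ℝ → Fin 3 → ℝ := fun s =>
    Function.update (Function.update a j (σj * Real.sqrt s / l j)) k
      (σk * Real.sqrt (r2 - s) / l k) with hc_def
  -- values of the updated coordinates
  have hcj : ∀ s, c s j = σj * Real.sqrt s / l j := by
    intro s
    simp only [hc_def]
    rw [Function.update_of_ne hjk', Function.update_self]
  have hck : ∀ s, c s k = σk * Real.sqrt (r2 - s) / l k := by
    intro s
    simp only [hc_def]
    rw [Function.update_self]
  have hci : ∀ s i, i ≠ j → i ≠ k → c s i = a i := by
    intro s i hij hik
    simp only [hc_def]
    rw [Function.update_of_ne hik, Function.update_of_ne hij]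
  -- c (bj^2) = a
  have hc0 : c (bj ^ 2) = a := by
    funext i
    by_cases hik : i = k
    · subst hik
      rw [hck]
      have h1 : r2 - bj ^ 2 = bk ^ 2 := by rw [hr2_def]; ring
      rw [h1, Real.sqrt_sq_eq_abs, hσk_abs, hbk_def]
      field_simp
    · by_cases hij : i = j
      · subst hij
        rw [hcj, Real.sqrt_sq_eq_abs, hσj_abs, hbj_def]
        field_simp
      · exact hci _ _ hij hik
  -- continuity
  have hvk : σk * Real.sqrt (r2 - bj ^ 2) / l k = a k := by
    have h := congrFun hc0 k
    rw [hck] at h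
    exact h
  have hvj : σj * Real.sqrt (bj ^ 2) / l j = a j := by
    have h := congrFun hc0 j
    rw [hcj] at h
    exact h
  have htend : Filter.Tendsto c (nhds (bj ^ 2)) (nhds a) := by
    rw [tendsto_pi_nhds]
    intro i
    by_cases hik : i = k
    · rw [hik]
      have heq : (fun s => c s k) = fun s : ℝ => σk * Real.sqrt (r2 - s) / l k :=
        funext hck
      rw [heq, ← hvk]
      exact ((continuous_const.mul (Real.continuous_sqrt.comp
        (continuous_const.sub continuous_id))).div_const _).tendsto _
    · by_cases hij : i = j
      · rw [hij]
        have heq : (fun s => c s j) = fun s : ℝ => σj * Real.sqrt s / l j :=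
          funext hcj
        rw [heq, ← hvj]
        exact ((continuous_const.mul Real.continuous_sqrt).div_const _).tendsto _
      · have heq : (fun s => c s i) = fun _ : ℝ => a i :=
          funext fun s => hci s i hij hik
        rw [heq]
        exact tendsto_const_nhds
  -- membership in S
  have hmemS : ∀ s, 0 ≤ s → s ≤ r2 → c s ∈ S := by
    intro s hs0 hsr
    have hupj : (l j * c s j) ^ 2 = s := by
      rw [hcj]; exact aux_sq _ _ _ hj0.ne' hσj_sq hs0
    have hupk : (l k * c s k) ^ 2 = r2 - s := by
      rw [hck]; exact aux_sq _ _ _ hk0.ne' hσk_sq (by linarith)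
    have hFG : ∑ i, (l i * c s i) ^ 2 = (∑ i, (l i * a i) ^ 2) + 0 := by
      apply sum3_eq' _ _ j k hjk'
      · intro i hij hik
        rw [hci s i hij hik]
      · show (l j * c s j) ^ 2 + (l k * c s k) ^ 2
          = (l j * a j) ^ 2 + (l k * a k) ^ 2 + 0
        rw [hupj, hupk, hr2_def, hbj_def, hbk_def]
        ring
    rw [hS] at ha ⊢
    simp only [Set.mem_setOf_eq] at ha ⊢
    rw [hFG, add_zero]
    exact ha
  -- value of f along the curve
  have hfval : ∀ s, 0 ≤ s → s ≤ r2 →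
      f (c s) = ((∑ i, l i * a i * a i)
        + (s / l j + (r2 - s) / l k - l j * a j * a j - l k * a k * a k)) / 2 := by
    intro s hs0 hsr
    have hupj : l j * c s j * c s j = s / l j := by
      rw [hcj]; exact aux_val _ _ _ hj0.ne' hσj_sq hs0
    have hupk : l k * c s k * c s k = (r2 - s) / l k := by
      rw [hck]; exact aux_val _ _ _ hk0.ne' hσk_sq (by linarith)
    have hFG : ∑ i, l i * c s i * c s i = (∑ i, l i * a i * a i)
        + (s / l j + (r2 - s) / l k - l j * a j * a j - l k * a k * a k) := by
      apply sum3_eq' _ _ j k hjk'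
      · intro i hij hik
        rw [hci s i hij hik]
      · show l j * c s j * c s j + l k * c s k * c s k
          = l j * a j * a j + l k * a k * a k
            + (s / l j + (r2 - s) / l k - l j * a j * a j - l k * a k * a k)
        rw [hupj, hupk]
        ring
    simp only [hf]
    rw [hFG]
  have hfa : f a = (∑ i, l i * a i * a i) / 2 := by rw [hf]
  -- extract ε from the local min
  have hmem : {x | f a ≤ f x} ∈ nhdsWithin a S := hmin
  rw [Metric.mem_nhdsWithin_iff] at hmem
  obtain ⟨ε, hε, hball⟩ := hmem
  -- find a suitable s
  have hbj2pos : (0:ℝ) < bj ^ 2 := by positivity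
  have h1 : ∀ᶠ s in nhds (bj ^ 2), dist (c s) a < ε := by
    have h := htend (Metric.ball_mem_nhds a hε)
    filter_upwards [h] with s hs using Metric.mem_ball.1 hs
  have h2 : ∀ᶠ s in nhds (bj ^ 2), 0 < s := eventually_gt_nhds hbj2pos
  have h3 : ∀ᶠ s in nhdsWithin (bj ^ 2) (Set.Iio (bj ^ 2)), s < bj ^ 2 :=
    eventually_mem_nhdsWithin
  obtain ⟨s, ⟨hs_dist, hs_pos⟩, hs_lt⟩ :=
    (((h1.and h2).filter_mono nhdsWithin_le_nhds).and h3).exists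
  have hsr : s ≤ r2 := le_trans hs_lt.le hbj2r2
  have hcsS : c s ∈ S := hmemS s hs_pos.le hsr
  have hle : f a ≤ f (c s) := hball ⟨Metric.mem_ball.2 hs_dist, hcsS⟩
  -- but f (c s) < f a
  have hΔkey : (s / l j + (r2 - s) / l k - l j * a j * a j - l k * a k * a k)
      * (l j * l k) = (s - bj ^ 2) * (l k - l j) := by
    rw [hr2_def, hbj_def, hbk_def]
    field_simp
    ring
  have hprod : (s - bj ^ 2) * (l k - l j) < 0 :=
    mul_neg_of_neg_of_pos (by linarith) (by linarith)
  have hΔneg : s / l j + (r2 - s) / l k - l j * a j * a j - l k * a k * a k < 0 := by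
    nlinarith [hΔkey, hprod, mul_pos hj0 hk0]
  have hlt : f (c s) < f a := by
    rw [hfval s hs_pos.le hsr, hfa]
    linarith
  linarith

/-- Critical points of the kinetic energy `f(a) = (I a | a)/2` on the
constraint set `{|I a| = m₀}` (characterized by the Lagrange condition
`a × I a = 0`) are exactly the eigenvectors of `I = diag(λ₁,λ₂,λ₃)` on the
constraint set, and local minima occur only at eigenvectors associated with the
largest moment of inertia `λ₃`; if `λ₃` is a strict maximum, only at
`a ∈ span(e₃)`. -/
theorem stmt17 (l : Fin 3 → ℝ) (hl : 0 < l 0) (h01 : l 0 ≤ l 1) (h12 : l 1 ≤ l 2)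
    (m₀ : ℝ) (hm₀ : 0 < m₀)
    (f : (Fin 3 → ℝ) → ℝ) (hf : f = fun a => (∑ i, l i * a i * a i) / 2)
    (S : Set (Fin 3 → ℝ))
    (hS : S = {a : Fin 3 → ℝ | Real.sqrt (∑ i, (l i * a i) ^ 2) = m₀}) :
    ∀ a ∈ S,
      ((a ⨯₃ (fun i => l i * a i) = 0 ↔ ∃ i : Fin 3, ∀ j, l j * a j = l i * a j)) ∧
      (IsLocalMinOn f S a →
        (∃ i : Fin 3, (∀ j, l j * a j = l i * a j) ∧ l i = l 2) ∧
        (l 1 < l 2 → ∀ j : Fin 3, j ≠ 2 → a j = 0)) := by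
  have hfin : ∀ i : Fin 3, i = 0 ∨ i = 1 ∨ i = 2 := by decide
  have hlpos : ∀ i, 0 < l i := by
    intro i
    rcases hfin i with rfl | rfl | rfl
    · exact hl
    · linarith
    · linarith
  intro a ha
  have hQ : (∑ i, (l i * a i) ^ 2) = m₀ ^ 2 := by
    rw [hS] at ha
    simp only [Set.mem_setOf_eq] at ha
    have h0 : (0:ℝ) ≤ ∑ i, (l i * a i) ^ 2 := Finset.sum_nonneg fun i _ => sq_nonneg _
    rw [← ha, Real.sq_sqrt h0]
  have hane : ∃ i, a i ≠ 0 := by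
    by_contra h
    push_neg at h
    have hz : (∑ i, (l i * a i) ^ 2) = 0 := by
      apply Finset.sum_eq_zero
      intro i _
      rw [h i]; ring
    rw [hQ] at hz
    nlinarith
  constructor
  · -- the iff
    constructor
    · intro hcross
      have h0 := congrFun hcross 0
      have h1 := congrFun hcross 1
      have h2 := congrFun hcross 2
      simp [crossProduct] at h0 h1 h2
      have p01 : (l 1 - l 0) * (a 1 * a 0) = 0 := by nlinarith [h2]
      have p02 : (l 2 - l 0) * (a 2 * a 0) = 0 := by nlinarith [h1]
      have p12 : (l 2 - l 1) * (a 2 * a 1) = 0 := by nlinarith [h0]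
      obtain ⟨i, hi⟩ := hane
      have hpair : ∀ x y : Fin 3, a x ≠ 0 → a y ≠ 0 → l x = l y := by
        intro x y hx hy
        rcases hfin x with rfl | rfl | rfl <;> rcases hfin y with rfl | rfl | rfl
        · rfl
        · exact (pair_eq p01 hy hx).symm
        · exact (pair_eq p02 hy hx).symm
        · exact pair_eq p01 hx hy
        · rfl
        · exact (pair_eq p12 hy hx).symm
        · exact pair_eq p02 hx hy
        · exact pair_eq p12 hx hy
        · rfl
      refine ⟨i, fun j => ?_⟩
      by_cases haj : a j = 0
      · rw [haj]; ring
      · rw [hpair j i haj hi]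
    · rintro ⟨i, hi⟩
      have e0 := hi 0
      have e1 := hi 1
      have e2 := hi 2
      funext m
      fin_cases m
      · simp [crossProduct]; linear_combination a 1 * e2 - a 2 * e1
      · simp [crossProduct]; linear_combination a 2 * e0 - a 0 * e2
      · simp [crossProduct]; linear_combination a 0 * e1 - a 1 * e0
  · intro hmin
    have hkey : ∀ j k : Fin 3, l j < l k → a j = 0 := fun j k hjk =>
      key_lemma l hlpos m₀ f hf S hS a ha j k hjk hmin
    constructor
    · refine ⟨2, fun j => ?_, rfl⟩
      by_cases haj : a j = 0
      · rw [haj]; ring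
      · have hle : l j ≤ l 2 := by
          rcases hfin j with rfl | rfl | rfl
          · linarith
          · linarith
          · linarith
        have hge : ¬ l j < l 2 := fun h => haj (hkey j 2 h)
        have heq : l j = l 2 := le_antisymm hle (not_lt.1 hge)
        rw [heq]
    · intro h12' j hj2
      have hlj : l j < l 2 := by
        rcases hfin j with rfl | rfl | rfl
        · linarith
        · linarith
        · exact absurd rfl hj2
      exact hkey j 2 hlj
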